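/- arXiv:1109.1598 — 2 statements merged into one kernel-verified Lean document; each statement's English description precedes it below -/
import Mathlib

section
/- Let C be a category with pullbacks. Two objects X and Y are equivalent in the bicategory of spans 2Span(C) if and only if they are isomorphic in C. Equivalently (avoiding bicategory formalism): if there exist spans X ← U → Y and Y ← V → X whose composites (formed by pullback) are each isomorphic, as spans, to the identity spans X ← X → X and Y ← Y → Y respectively, then X ≅ Y in C. -/
open CategoryTheory CategoryTheory.Limits

/-- In the bicategory of spans in a category with pullbacks, two objects are equivalent
(there are spans `X ← U → Y` and `Y ← V → X` whose pullback-composites are isomorphic,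
as spans, to the identity spans) if and only if they are isomorphic in `C`. -/
theorem span_equiv_iff_iso {C : Type*} [Category C] [HasPullbacks C] (X Y : C) :
    (∃ (U V : C) (a : U ⟶ X) (b : U ⟶ Y) (c : V ⟶ Y) (d : V ⟶ X),
      -- the composite span `X ← U ×_Y V → X` is isomorphic to the identity span on `X`
      (∃ φ : pullback b c ≅ X,
        pullback.fst b c ≫ a = φ.hom ∧ pullback.snd b c ≫ d = φ.hom) ∧
      -- the composite span `Y ← V ×_X U → Y` is isomorphic to the identity span on `Y`
      (∃ ψ : pullback d a ≅ Y,
        pullback.fst d a ≫ c = ψ.hom ∧ pullback.snd d a ≫ b = ψ.hom))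
    ↔ Nonempty (X ≅ Y) := by
  constructor
  · rintro ⟨U, V, a, b, c, d, ⟨φ, hφ1, hφ2⟩, ⟨ψ, hψ1, hψ2⟩⟩
    -- the swap lifts between the two composite pullbacks
    have hl : pullback.snd b c ≫ d = pullback.fst b c ≫ a := hφ2.trans hφ1.symm
    have hl' : pullback.snd d a ≫ b = pullback.fst d a ≫ c := hψ2.trans hψ1.symm
    set l : pullback b c ⟶ pullback d a := pullback.lift (pullback.snd b c) (pullback.fst b c) hl with hldef
    set l' : pullback d a ⟶ pullback b c := pullback.lift (pullback.snd d a) (pullback.fst d a) hl' with hl'def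
    refine ⟨⟨φ.inv ≫ pullback.fst b c ≫ b, ψ.inv ≫ pullback.fst d a ≫ d, ?_, ?_⟩⟩
    · have key : pullback.fst b c ≫ b = l ≫ ψ.hom := by
        rw [← hψ1, hldef]
        rw [← Category.assoc, pullback.lift_fst, pullback.condition]
      calc (φ.inv ≫ pullback.fst b c ≫ b) ≫ ψ.inv ≫ pullback.fst d a ≫ d
          = φ.inv ≫ (l ≫ ψ.hom ≫ ψ.inv) ≫ pullback.fst d a ≫ d := by
            simp [key]
        _ = φ.inv ≫ l ≫ pullback.fst d a ≫ d := by simp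
        _ = φ.inv ≫ pullback.snd b c ≫ d := by
            rw [← Category.assoc l, hldef, pullback.lift_fst]
        _ = 𝟙 X := by rw [hφ2]; simp
    · have key : pullback.fst d a ≫ d = l' ≫ φ.hom := by
        rw [← hφ2, hl'def]
        rw [← Category.assoc, pullback.lift_snd]
      calc (ψ.inv ≫ pullback.fst d a ≫ d) ≫ φ.inv ≫ pullback.fst b c ≫ b
          = ψ.inv ≫ (l' ≫ φ.hom ≫ φ.inv) ≫ pullback.fst b c ≫ b := by
            simp [key]
        _ = ψ.inv ≫ l' ≫ pullback.fst b c ≫ b := by simp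
        _ = ψ.inv ≫ pullback.snd d a ≫ b := by
            rw [← Category.assoc l', hl'def, pullback.lift_fst]
        _ = 𝟙 Y := by rw [hψ2]; simp
  · rintro ⟨e⟩
    refine ⟨X, Y, 𝟙 X, e.hom, 𝟙 Y, e.inv, ?_, ?_⟩
    · refine ⟨⟨pullback.fst e.hom (𝟙 Y), pullback.lift (𝟙 X) e.hom (by simp), ?_, ?_⟩, by simp, ?_⟩
      · apply pullback.hom_ext
        · rw [Category.assoc, pullback.lift_fst, Category.comp_id, Category.id_comp]
        · rw [Category.assoc, pullback.lift_snd, Category.id_comp]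
          simpa using pullback.condition (f := e.hom) (g := 𝟙 Y)
      · rw [pullback.lift_fst]
      · have := pullback.condition (f := e.hom) (g := 𝟙 Y)
        simp only [Category.comp_id] at this
        simp [Iso.comp_inv_eq, this]
    · refine ⟨⟨pullback.fst e.inv (𝟙 X), pullback.lift (𝟙 Y) e.inv (by simp), ?_, ?_⟩, by simp, ?_⟩
      · apply pullback.hom_ext
        · rw [Category.assoc, pullback.lift_fst, Category.comp_id, Category.id_comp]
        · rw [Category.assoc, pullback.lift_snd, Category.id_comp]
          simpa using pullback.condition (f := e.inv) (g := 𝟙 X)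
      · rw [pullback.lift_fst]
      · have := pullback.condition (f := e.inv) (g := 𝟙 X)
        simp only [Category.comp_id] at this
        simp only [← this]
        simp
end

section
/- For a commutative monoid M and a span of finite sets X ←f− U −g→ Y, define the operation M^X → M^Y sending A to the function y ↦ ∑_{u ∈ g⁻¹(y)} A(f(u)). Then this assignment is functorial: for composable spans X ← U → Y and Y ← V → Z, the operation of the composite span (formed by the pullback U ×_Y V) equals the composite of the two operations. -/
open Finset

/-- The operation `M^X → M^Y` induced by a span `X ←f– U –g→ Y` of finite sets:
`A ↦ (y ↦ ∑_{u ∈ g⁻¹(y)} A (f u))`. -/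
def spanOp {M X Y U : Type} [AddCommMonoid M] [Fintype U] [DecidableEq Y]
    (f : U → X) (g : U → Y) (A : X → M) : Y → M :=
  fun y => ∑ u ∈ univ.filter (fun u => g u = y), A (f u)

/-- Functoriality of span operations on a commutative monoid: the operation induced by
the pullback-composite span equals the composite of the induced operations. -/
theorem spanOp_comp {M X Y Z U V : Type} [AddCommMonoid M]
    [Fintype U] [Fintype V] [DecidableEq Y] [DecidableEq Z]
    (f : U → X) (g : U → Y) (f' : V → Y) (g' : V → Z) (A : X → M) :
    spanOp (fun p : {p : U × V // g p.1 = f' p.2} => f p.1.1)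
           (fun p : {p : U × V // g p.1 = f' p.2} => g' p.1.2) A
      = spanOp f' g' (spanOp f g A) := by
  funext z
  unfold spanOp
  rw [Finset.sum_sigma']
  refine Finset.sum_bij' (fun p _ => ⟨p.1.2, p.1.1⟩)
    (fun q hq => ⟨(q.2, q.1), by simp [Finset.mem_sigma, Finset.mem_filter] at hq; exact hq.2⟩)
    ?_ ?_ ?_ ?_ ?_ <;>
  simp [Finset.mem_sigma, Finset.mem_filter] <;> tauto
end
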